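/- Fix m ∈ [0,1] and let F: [0,1]² → ℝ be defined by F(x₁, x₂) = x₁ + x₂ − (2 − m)·x₁x₂ (this is the multilinear extension of the set function f on a two-element ground set {u, v} given by f(S) = m·1[S ≠ ∅] + (1 − m)·(|S| mod 2)). Then the maximum of F over [0,1]² equals 1, while the maximum of F over the diagonal {(y, y) : y ∈ [0,1]} equals 1/(2 − m). In particular, the symmetry gap of the corresponding unconstrained maximization problem is 1/(2 − m). -/

import Mathlib

/-- for `F(x₁,x₂) = x₁ + x₂ − (2−m)x₁x₂` with `m ∈ [0,1]`, the maximum of `F`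
over `[0,1]²` equals `1`, while the maximum over the diagonal equals `1/(2−m)`; hence the
symmetry gap of the corresponding unconstrained problem is `1/(2−m)`. -/
theorem stmt4 (m : ℝ) (hm : m ∈ Set.Icc (0 : ℝ) 1)
    (F : ℝ → ℝ → ℝ)
    (hF : ∀ x₁ x₂ : ℝ, F x₁ x₂ = x₁ + x₂ - (2 - m) * (x₁ * x₂)) :
    IsGreatest {z : ℝ | ∃ x₁ ∈ Set.Icc (0 : ℝ) 1, ∃ x₂ ∈ Set.Icc (0 : ℝ) 1, z = F x₁ x₂} 1 ∧
    IsGreatest {z : ℝ | ∃ y ∈ Set.Icc (0 : ℝ) 1, z = F y y} (1 / (2 - m)) := by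
  obtain ⟨hm0, hm1⟩ := hm
  have h2m : (1 : ℝ) ≤ 2 - m := by linarith
  have h2m0 : (0 : ℝ) < 2 - m := by linarith
  constructor
  · constructor
    · exact ⟨1, ⟨by norm_num, by norm_num⟩, 0, ⟨le_refl 0, by norm_num⟩, by
        rw [hF]; ring⟩
    · rintro z ⟨x₁, ⟨h1a, h1b⟩, x₂, ⟨h2a, h2b⟩, rfl⟩
      rw [hF]
      nlinarith [mul_nonneg (sub_nonneg.2 h1b) (sub_nonneg.2 h2b),
        mul_nonneg h1a h2a]
  · constructor
    · refine ⟨1 / (2 - m), ⟨by positivity, ?_⟩, ?_⟩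
      · rw [div_le_one h2m0]; linarith
      · rw [hF]; field_simp; ring
    · rintro z ⟨y, ⟨hy0, hy1⟩, rfl⟩
      rw [hF, le_div_iff₀ h2m0]
      nlinarith [sq_nonneg ((2 - m) * y - 1)]
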